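/- Let n, k, r ≥ 0, let τ be a finite relational vocabulary, and for i ∈ {1,2} let A_i be a τ-structure and ā_i an r-tuple from A_i. Then the following are equivalent: (1) the Duplicator has a winning strategy in the (n,k)-tree-prefix game on {(A₁,ā₁),(A₂,ā₂)}; (2) (A₁,ā₁) ≡_{(n,k)} (A₂,ā₂), i.e., (A₁,ā₁) and (A₂,ā₂) agree on all tΣ_{(n,k)} formulae φ(x̄) with |x̄| = r. -/
import Mathlib


namespace FV

open Cardinal

/-- A (finite) relational vocabulary: a type of relation symbols with arities. -/
structure Vocab : Type 1 where
  Rel : Type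
  arity : Rel → ℕ

/-- A structure over a relational vocabulary. -/
structure Struc (τ : Vocab) : Type 1 where
  carrier : Type
  rel : ∀ R : τ.Rel, (Fin (τ.arity R) → carrier) → Prop

/-- Infinitary formulae in negation normal form over a relational vocabulary,
with free variables among `Fin n`. -/
inductive Formula (τ : Vocab) : ℕ → Type 1 where
  | tru {n : ℕ} : Formula τ n
  | fls {n : ℕ} : Formula τ n
  | rel {n : ℕ} (R : τ.Rel) (ts : Fin (τ.arity R) → Fin n) : Formula τ n
  | nrel {n : ℕ} (R : τ.Rel) (ts : Fin (τ.arity R) → Fin n) : Formula τ n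
  | eq {n : ℕ} (i j : Fin n) : Formula τ n
  | neq {n : ℕ} (i j : Fin n) : Formula τ n
  | iAnd {n : ℕ} (I : Type) (f : I → Formula τ n) : Formula τ n
  | iOr {n : ℕ} (I : Type) (f : I → Formula τ n) : Formula τ n
  | ex {n : ℕ} (φ : Formula τ (n+1)) : Formula τ n
  | all {n : ℕ} (φ : Formula τ (n+1)) : Formula τ n

/-- Binary conjunction (a conjunction of arity 2). -/
def Formula.and {τ : Vocab} {n : ℕ} (φ ψ : Formula τ n) : Formula τ n :=
  Formula.iAnd Bool (fun b => if b then φ else ψ)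

/-- Binary disjunction (a disjunction of arity 2). -/
def Formula.or {τ : Vocab} {n : ℕ} (φ ψ : Formula τ n) : Formula τ n :=
  Formula.iOr Bool (fun b => if b then φ else ψ)

/-- Quantifier-free formulae (in NNF, with finite conjunctions/disjunctions). -/
inductive IsQF {τ : Vocab} : ∀ {n : ℕ}, Formula τ n → Prop where
  | tru {n : ℕ} : IsQF (Formula.tru (τ := τ) (n := n))
  | fls {n : ℕ} : IsQF (Formula.fls (τ := τ) (n := n))
  | rel {n : ℕ} (R : τ.Rel) (ts : Fin (τ.arity R) → Fin n) : IsQF (Formula.rel R ts)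
  | nrel {n : ℕ} (R : τ.Rel) (ts : Fin (τ.arity R) → Fin n) : IsQF (Formula.nrel R ts)
  | eq {n : ℕ} (i j : Fin n) : IsQF (Formula.eq (τ := τ) i j)
  | neq {n : ℕ} (i j : Fin n) : IsQF (Formula.neq (τ := τ) i j)
  | iAnd {n : ℕ} (I : Type) (hI : Finite I) (f : I → Formula τ n)
      (h : ∀ i, IsQF (f i)) : IsQF (Formula.iAnd I f)
  | iOr {n : ℕ} (I : Type) (hI : Finite I) (f : I → Formula τ n)
      (h : ∀ i, IsQF (f i)) : IsQF (Formula.iOr I f)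

/-- Satisfaction of a formula in a structure under an assignment. -/
def Sat {τ : Vocab} (A : Struc τ) : ∀ {n : ℕ}, Formula τ n → (Fin n → A.carrier) → Prop
  | _, .tru, _ => True
  | _, .fls, _ => False
  | _, .rel R ts, v => A.rel R (fun i => v (ts i))
  | _, .nrel R ts, v => ¬ A.rel R (fun i => v (ts i))
  | _, .eq i j, v => v i = v j
  | _, .neq i j, v => v i ≠ v j
  | _, .iAnd I f, v => ∀ i : I, Sat A (f i) v
  | _, .iOr I f, v => ∃ i : I, Sat A (f i) v
  | _, .ex φ, v => ∃ a, Sat A φ (Fin.snoc v a)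
  | _, .all φ, v => ∀ a, Sat A φ (Fin.snoc v a)

/-- The empty assignment. -/
def emptyA {α : Type} : Fin 0 → α := fun i => i.elim0

/-- The (quantifier) rank of a formula: the supremum of the number of quantifiers
on any root-to-leaf path of its parse tree. -/
noncomputable def rank {τ : Vocab} : ∀ {n : ℕ}, Formula τ n → Cardinal
  | _, .iAnd I f => ⨆ i : I, rank (f i)
  | _, .iOr I f => ⨆ i : I, rank (f i)
  | _, .ex φ => rank φ + 1
  | _, .all φ => rank φ + 1
  | _, _ => 0

/-- The size of a formula (number of nodes of its parse tree), as a cardinal. -/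
noncomputable def sizeC {τ : Vocab} : ∀ {n : ℕ}, Formula τ n → Cardinal
  | _, .iAnd I f => 1 + Cardinal.sum (fun i : I => sizeC (f i))
  | _, .iOr I f => 1 + Cardinal.sum (fun i : I => sizeC (f i))
  | _, .ex φ => 1 + sizeC φ
  | _, .all φ => 1 + sizeC φ
  | _, _ => 1

mutual
/-- The class tΣ_{κ,λ} of formulae. -/
inductive TSigma (τ : Vocab) (κ : Cardinal) : Ordinal → ∀ {n : ℕ}, Formula τ n → Prop where
  | qf {n : ℕ} {φ : Formula τ n} : IsQF φ → TSigma τ κ 0 φ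
  | conj {n : ℕ} {lam : Ordinal} (I : Type) (f : I → Formula τ n)
      (hI : Cardinal.mk I < κ) (lam' : I → Ordinal) (hlt : ∀ i, lam' i < lam)
      (h : ∀ i, TPi τ κ (lam' i) (f i)) : TSigma τ κ lam (Formula.iAnd I f)
  | ex {n : ℕ} {lam : Ordinal} {φ : Formula τ (n+1)} :
      TSigma τ κ lam φ → TSigma τ κ lam (Formula.ex φ)

/-- The class tΠ_{κ,λ} of formulae. -/
inductive TPi (τ : Vocab) (κ : Cardinal) : Ordinal → ∀ {n : ℕ}, Formula τ n → Prop where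
  | qf {n : ℕ} {φ : Formula τ n} : IsQF φ → TPi τ κ 0 φ
  | disj {n : ℕ} {lam : Ordinal} (I : Type) (f : I → Formula τ n)
      (hI : Cardinal.mk I < κ) (lam' : I → Ordinal) (hlt : ∀ i, lam' i < lam)
      (h : ∀ i, TSigma τ κ (lam' i) (f i)) : TPi τ κ lam (Formula.iOr I f)
  | all {n : ℕ} {lam : Ordinal} {φ : Formula τ (n+1)} :
      TPi τ κ lam φ → TPi τ κ lam (Formula.all φ)
end

/-- tΣ_{∞,λ}: union of tΣ_{κ,λ} over all infinite cardinals κ. -/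
def TSigmaInf (τ : Vocab) (lam : Ordinal) {n : ℕ} (φ : Formula τ n) : Prop :=
  ∃ κ : Cardinal, ℵ₀ ≤ κ ∧ TSigma τ κ lam φ

/-- tΠ_{∞,λ}: union of tΠ_{κ,λ} over all infinite cardinals κ. -/
def TPiInf (τ : Vocab) (lam : Ordinal) {n : ℕ} (φ : Formula τ n) : Prop :=
  ∃ κ : Cardinal, ℵ₀ ≤ κ ∧ TPi τ κ lam φ

/-- The λ-fold exponential `tower` function (taking suprema at limits). -/
noncomputable def towerC (κ : Cardinal) (l : Ordinal) : Cardinal :=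
  Ordinal.limitRecOn l κ (fun _ ih => (2 : Cardinal) ^ ih)
    (fun o _ ih => ⨆ i : {o' : Ordinal // o' < o}, ih i.1 i.2)

/-- The n-fold exponential `tower` function on naturals. -/
def towerN : ℕ → Cardinal → Cardinal
  | 0, k => k
  | n+1, k => (2 : Cardinal) ^ towerN n k

open Classical in
/-- ρ(κ,λ) = tower(λ,κ) if κ > ω, else ω. -/
noncomputable def rho (κ : Cardinal) (lam : Ordinal) : Cardinal :=
  if ℵ₀ < κ then towerC κ lam else ℵ₀

/-- ∞-propositional formulae over a set `V` of propositional variables. -/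
inductive PropForm (V : Type) : Type 1 where
  | var (v : V) : PropForm V
  | not (p : PropForm V) : PropForm V
  | iAnd (I : Type) (f : I → PropForm V) : PropForm V
  | iOr (I : Type) (f : I → PropForm V) : PropForm V

/-- Binary conjunction of propositional formulae. -/
def PropForm.and {V : Type} (p q : PropForm V) : PropForm V :=
  PropForm.iAnd Bool (fun b => if b then p else q)

/-- Binary disjunction of propositional formulae. -/
def PropForm.or {V : Type} (p q : PropForm V) : PropForm V :=
  PropForm.iOr Bool (fun b => if b then p else q)

/-- Evaluation of an ∞-propositional formula under an assignment. -/
def PropForm.eval {V : Type} (ζ : V → Bool) : PropForm V → Prop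
  | .var v => ζ v = true
  | .not p => ¬ PropForm.eval ζ p
  | .iAnd _ f => ∀ i, PropForm.eval ζ (f i)
  | .iOr _ f => ∃ i, PropForm.eval ζ (f i)

/-- Negation-free ∞-propositional formulae. -/
inductive PropForm.NegFree {V : Type} : PropForm V → Prop where
  | var (v : V) : PropForm.NegFree (.var v)
  | iAnd (I : Type) (f : I → PropForm V) (h : ∀ i, PropForm.NegFree (f i)) :
      PropForm.NegFree (.iAnd I f)
  | iOr (I : Type) (f : I → PropForm V) (h : ∀ i, PropForm.NegFree (f i)) :
      PropForm.NegFree (.iOr I f)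

/-- Finitary (ordinary) propositional formulae. -/
inductive PropForm.Finitary {V : Type} : PropForm V → Prop where
  | var (v : V) : PropForm.Finitary (.var v)
  | not (p : PropForm V) (h : PropForm.Finitary p) : PropForm.Finitary (.not p)
  | iAnd (I : Type) (hI : Finite I) (f : I → PropForm V)
      (h : ∀ i, PropForm.Finitary (f i)) : PropForm.Finitary (.iAnd I f)
  | iOr (I : Type) (hI : Finite I) (f : I → PropForm V)
      (h : ∀ i, PropForm.Finitary (f i)) : PropForm.Finitary (.iOr I f)

/-- Size of an ∞-propositional formula. -/
noncomputable def PropForm.size {V : Type} : PropForm V → Cardinal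
  | .var _ => 1
  | .not p => 1 + PropForm.size p
  | .iAnd I f => 1 + Cardinal.sum (fun i : I => PropForm.size (f i))
  | .iOr I f => 1 + Cardinal.sum (fun i : I => PropForm.size (f i))

/-- A reduction sequence `D(x̄₁, x̄₂) = (Δ₁(x̄₁), Δ₂(x̄₂), β)` over τ. -/
structure RedSeq (τ : Vocab) (r₁ r₂ : ℕ) : Type 1 where
  I : Type
  Δ₁ : I → Formula τ r₁
  Δ₂ : I → Formula τ r₂
  β : PropForm (I × Fin 2)

/-- `(A₁, A₂, ā₁, ā₂)` is a model of the reduction sequence `D`. -/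
def RedSeq.Models {τ : Vocab} {r₁ r₂ : ℕ} (D : RedSeq τ r₁ r₂) (A₁ A₂ : Struc τ)
    (a₁ : Fin r₁ → A₁.carrier) (a₂ : Fin r₂ → A₂.carrier) : Prop :=
  ∃ ζ : D.I × Fin 2 → Bool, D.β.eval ζ ∧
    (∀ i : D.I, (ζ (i, 0) = true ↔ Sat A₁ (D.Δ₁ i) a₁)) ∧
    (∀ i : D.I, (ζ (i, 1) = true ↔ Sat A₂ (D.Δ₂ i) a₂))

/-- Size of a reduction sequence. -/
noncomputable def RedSeq.size {τ : Vocab} {r₁ r₂ : ℕ} (D : RedSeq τ r₁ r₂) : Cardinal :=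
  Cardinal.sum (fun i : D.I => sizeC (D.Δ₁ i)) +
    Cardinal.sum (fun i : D.I => sizeC (D.Δ₂ i)) + D.β.size

/-- The vocabulary τ̱ = τ ∪ {P} for a new unary predicate P (represented by `none`). -/
def annotV (τ : Vocab) : Vocab where
  Rel := Option τ.Rel
  arity := fun R => match R with
    | none => 1
    | some S => τ.arity S

/-- The annotated disjoint union of two τ-structures: their disjoint union,
expanded by interpreting the new unary predicate P as the universe of the first. -/
def adu {τ : Vocab} (A₁ A₂ : Struc τ) : Struc (annotV τ) where
  carrier := A₁.carrier ⊕ A₂.carrier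
  rel := fun R => match R with
    | none => fun v => (v ⟨0, Nat.one_pos⟩).isLeft = true
    | some S => fun v =>
        (∃ w : Fin (τ.arity S) → A₁.carrier, A₁.rel S w ∧ v = fun i => Sum.inl (w i)) ∨
        (∃ w : Fin (τ.arity S) → A₂.carrier, A₂.rel S w ∧ v = fun i => Sum.inr (w i))

/-- `D` is a Feferman–Vaught decomposition of `φ(x̄₁,x̄₂)` over annotated disjoint union. -/
def FVDecompADU {τ : Vocab} {r₁ r₂ : ℕ} (φ : Formula (annotV τ) (r₁ + r₂))
    (D : RedSeq τ r₁ r₂) : Prop :=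
  ∀ (A₁ A₂ : Struc τ) (a₁ : Fin r₁ → A₁.carrier) (a₂ : Fin r₂ → A₂.carrier),
    Sat (adu A₁ A₂) φ (Fin.append (fun i => Sum.inl (a₁ i)) (fun i => Sum.inr (a₂ i)))
      ↔ D.Models A₁ A₂ a₁ a₂

/-- `D` is a Feferman–Vaught decomposition of the sentence `φ` over the binary operation `op`. -/
def FVDecompOp {τ : Vocab} (op : Struc τ → Struc τ → Struc τ) (φ : Formula τ 0)
    (D : RedSeq τ 0 0) : Prop :=
  ∀ A₁ A₂ : Struc τ, Sat (op A₁ A₂) φ emptyA ↔ D.Models A₁ A₂ emptyA emptyA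

/-- A quantifier-free scalar (σ,τ)-interpretation. -/
structure QFInterp (σ τ : Vocab) : Type 1 where
  xiU : Formula σ 1
  xiR : ∀ R : τ.Rel, Formula σ (τ.arity R)
  hU : IsQF xiU
  hR : ∀ R : τ.Rel, IsQF (xiR R)

/-- The τ-structure interpreted in a σ-structure by a quantifier-free interpretation. -/
def QFInterp.app {σ τ : Vocab} (Ξ : QFInterp σ τ) (A : Struc σ) : Struc τ where
  carrier := { a : A.carrier // Sat A Ξ.xiU (fun _ => a) }
  rel := fun R v => Sat A (Ξ.xiR R) (fun i => (v i).1)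

/-- The quantifier-free sum-like binary operation defined by a (τ̱,τ)-interpretation. -/
def sumLike {τ : Vocab} (Ξ : QFInterp (annotV τ) τ) (A₁ A₂ : Struc τ) : Struc τ :=
  Ξ.app (adu A₁ A₂)


/-- Relabelling of free variables. -/
def relabel {τ : Vocab} : ∀ {m n : ℕ}, (Fin m → Fin n) → Formula τ m → Formula τ n
  | _, _, _, .tru => .tru
  | _, _, _, .fls => .fls
  | _, _, g, .rel R ts => .rel R (fun i => g (ts i))
  | _, _, g, .nrel R ts => .nrel R (fun i => g (ts i))
  | _, _, g, .eq i j => .eq (g i) (g j)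
  | _, _, g, .neq i j => .neq (g i) (g j)
  | _, _, g, .iAnd I f => .iAnd I (fun i => relabel g (f i))
  | _, _, g, .iOr I f => .iOr I (fun i => relabel g (f i))
  | _, _, g, .ex φ => .ex (relabel (Fin.snoc (fun i => Fin.castSucc (g i)) (Fin.last _)) φ)
  | _, _, g, .all φ => .all (relabel (Fin.snoc (fun i => Fin.castSucc (g i)) (Fin.last _)) φ)

/-- Negation, in negation normal form. -/
def nnfNeg {τ : Vocab} : ∀ {n : ℕ}, Formula τ n → Formula τ n
  | _, .tru => .fls
  | _, .fls => .tru
  | _, .rel R ts => .nrel R ts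
  | _, .nrel R ts => .rel R ts
  | _, .eq i j => .neq i j
  | _, .neq i j => .eq i j
  | _, .iAnd I f => .iOr I (fun i => nnfNeg (f i))
  | _, .iOr I f => .iAnd I (fun i => nnfNeg (f i))
  | _, .ex φ => .all (nnfNeg φ)
  | _, .all φ => .ex (nnfNeg φ)

/-- Finite conjunction of a tuple of formulae. -/
def finAnd {τ : Vocab} {n : ℕ} : ∀ {r : ℕ}, (Fin r → Formula τ n) → Formula τ n
  | 0, _ => .tru
  | r+1, f => (finAnd (fun i => f (Fin.castSucc i))).and (f (Fin.last r))

/-- A block of `k` existential quantifiers. -/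
def exBlock {τ : Vocab} : ∀ (k : ℕ) {r : ℕ}, Formula τ (r + k) → Formula τ r
  | 0, _, φ => φ
  | k+1, _, φ => exBlock k (Formula.ex φ)

/-- A block of `k` universal quantifiers. -/
def allBlock {τ : Vocab} : ∀ (k : ℕ) {r : ℕ}, Formula τ (r + k) → Formula τ r
  | 0, _, φ => φ
  | k+1, _, φ => allBlock k (Formula.all φ)

mutual
/-- The class tΣ_{(n,k)}: tΣ_n formulae all of whose quantifier blocks have length exactly k. -/
inductive SigNK (τ : Vocab) (k : ℕ) : ℕ → ∀ {r : ℕ}, Formula τ r → Prop where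
  | qf {r : ℕ} {φ : Formula τ r} : IsQF φ → SigNK τ k 0 φ
  | blk {r n : ℕ} (hn : 0 < n) (I : Type) (hI : Finite I) (f : I → Formula τ (r + k))
      (n' : I → ℕ) (hlt : ∀ i, n' i < n) (h : ∀ i, PiNK τ k (n' i) (f i)) :
      SigNK τ k n (exBlock k (Formula.iAnd I f))
/-- The class tΠ_{(n,k)}: tΠ_n formulae all of whose quantifier blocks have length exactly k. -/
inductive PiNK (τ : Vocab) (k : ℕ) : ℕ → ∀ {r : ℕ}, Formula τ r → Prop where
  | qf {r : ℕ} {φ : Formula τ r} : IsQF φ → PiNK τ k 0 φ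
  | blk {r n : ℕ} (hn : 0 < n) (I : Type) (hI : Finite I) (f : I → Formula τ (r + k))
      (n' : I → ℕ) (hlt : ∀ i, n' i < n) (h : ∀ i, SigNK τ k (n' i) (f i)) :
      PiNK τ k n (allBlock k (Formula.iOr I f))
end

/-- Partial isomorphism condition on a pair of tuples. -/
def PIso {τ : Vocab} (A₁ A₂ : Struc τ) (r : ℕ)
    (a₁ : Fin r → A₁.carrier) (a₂ : Fin r → A₂.carrier) : Prop :=
  (∀ i j : Fin r, a₁ i = a₁ j ↔ a₂ i = a₂ j) ∧
  (∀ (R : τ.Rel) (ts : Fin (τ.arity R) → Fin r),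
      A₁.rel R (fun l => a₁ (ts l)) ↔ A₂.rel R (fun l => a₂ (ts l)))

/-- The Duplicator has a winning strategy in the (n,k)-prefix game on the ordered pair
((A₁,ā₁),(A₂,ā₂)): in odd rounds the Spoiler picks a k-tuple in A₁ (and the Duplicator
answers in A₂), in even rounds the roles of the structures are swapped; the Duplicator wins
a play if the chosen tuples collectively form a partial isomorphism. -/
def DWinPrefix {τ : Vocab} (k : ℕ) : ℕ → (A₁ A₂ : Struc τ) → (r : ℕ) →
    (Fin r → A₁.carrier) → (Fin r → A₂.carrier) → Prop
  | 0, A₁, A₂, r, a₁, a₂ => PIso A₁ A₂ r a₁ a₂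
  | n+1, A₁, A₂, r, a₁, a₂ =>
      ∀ b₁ : Fin k → A₁.carrier, ∃ b₂ : Fin k → A₂.carrier,
        DWinPrefix k n A₂ A₁ (r + k) (Fin.append a₂ b₂) (Fin.append a₁ b₁)

/-- The Duplicator has a winning strategy in the (n,k)-tree-prefix game on the set
{(A₁,ā₁),(A₂,ā₂)}: in the first round the Spoiler picks a k-tuple in either structure, and
thereafter in the structure in which the Duplicator chose in the previous round. -/
def DWinTree {τ : Vocab} (k : ℕ) : ℕ → (A₁ A₂ : Struc τ) → (r : ℕ) →
    (Fin r → A₁.carrier) → (Fin r → A₂.carrier) → Prop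
  | 0, A₁, A₂, r, a₁, a₂ => PIso A₁ A₂ r a₁ a₂
  | n+1, A₁, A₂, r, a₁, a₂ =>
      (∀ b₁ : Fin k → A₁.carrier, ∃ b₂ : Fin k → A₂.carrier,
        DWinPrefix k n A₂ A₁ (r + k) (Fin.append a₂ b₂) (Fin.append a₁ b₁)) ∧
      (∀ b₂ : Fin k → A₂.carrier, ∃ b₁ : Fin k → A₁.carrier,
        DWinPrefix k n A₁ A₂ (r + k) (Fin.append a₁ b₁) (Fin.append a₂ b₂))

/-- (A₁,ā₁) ⇛_{(n,k)} (A₂,ā₂) : every tΣ_{(n,k)} formula true of (A₁,ā₁) is true of (A₂,ā₂). -/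
def TransferNK {τ : Vocab} (n k : ℕ) (A₁ A₂ : Struc τ) (r : ℕ)
    (a₁ : Fin r → A₁.carrier) (a₂ : Fin r → A₂.carrier) : Prop :=
  ∀ φ : Formula τ r, SigNK τ k n φ → Sat A₁ φ a₁ → Sat A₂ φ a₂

/-- (A₁,ā₁) ≡_{(n,k)} (A₂,ā₂) : agreement on all tΣ_{(n,k)} formulae. -/
def EquivNK {τ : Vocab} (n k : ℕ) (A₁ A₂ : Struc τ) (r : ℕ)
    (a₁ : Fin r → A₁.carrier) (a₂ : Fin r → A₂.carrier) : Prop :=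
  ∀ φ : Formula τ r, SigNK τ k n φ → (Sat A₁ φ a₁ ↔ Sat A₂ φ a₂)

namespace QFInterp

variable {σ τ : Vocab}

/-- The universe formula ξ_U applied at variable `i`. -/
def uAt (Ξ : QFInterp σ τ) {n : ℕ} (i : Fin n) : Formula σ n :=
  relabel (fun _ : Fin 1 => i) Ξ.xiU

/-- The universe formula ξ_U applied at the last (just-quantified) variable. -/
def uLast (Ξ : QFInterp σ τ) {n : ℕ} : Formula σ (n+1) :=
  Ξ.uAt (Fin.last n)

/-- Close a pending quantifier-block guard. -/
def closeG {n : ℕ} : Option (Bool × Formula σ n) → Formula σ n → Formula σ n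
  | none, r => r
  | some (true, g), r => g.and r
  | some (false, g), r => g.or r

/-- Block-wise translation Ξ(φ) of a formula under a quantifier-free interpretation,
with an accumulator carrying the pending universe-guard of the current quantifier block:
Ξ(R(z̄)) = ξ_R(z̄) ∧ ⋀ᵢ ξ_U(zᵢ); Ξ(¬R(z̄)) = ¬ξ_R(z̄) ∧ ⋀ᵢ ξ_U(zᵢ) (¬ξ_R in NNF);
Ξ commutes with conjunctions and disjunctions; Ξ(∃x̄ ⋀ᵢφᵢ) = ∃x̄(⋀ⱼ ξ_U(xⱼ) ∧ ⋀ᵢΞ(φᵢ));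
Ξ(∀x̄ ⋁ᵢφᵢ) = ∀x̄((⋁ⱼ ¬ξ_U(xⱼ)) ∨ ⋁ᵢΞ(φᵢ)) (¬ξ_U in NNF). -/
def trA (Ξ : QFInterp σ τ) : ∀ {n : ℕ}, Option (Bool × Formula σ n) → Formula τ n → Formula σ n
  | _, mode, .tru => closeG mode .tru
  | _, mode, .fls => closeG mode .fls
  | _, mode, .rel R ts =>
      closeG mode ((relabel ts (Ξ.xiR R)).and (finAnd (fun i => Ξ.uAt (ts i))))
  | _, mode, .nrel R ts =>
      closeG mode ((nnfNeg (relabel ts (Ξ.xiR R))).and (finAnd (fun i => Ξ.uAt (ts i))))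
  | _, mode, .eq i j => closeG mode ((Formula.eq i j).and ((Ξ.uAt i).and (Ξ.uAt j)))
  | _, mode, .neq i j => closeG mode ((Formula.neq i j).and ((Ξ.uAt i).and (Ξ.uAt j)))
  | _, some (true, g), .iAnd I f =>
      .iAnd (Option I) (fun o => o.elim g (fun i => Ξ.trA none (f i)))
  | _, some (false, g), .iOr I f =>
      .iOr (Option I) (fun o => o.elim g (fun i => Ξ.trA none (f i)))
  | _, mode, .iAnd I f => closeG mode (.iAnd I (fun i => Ξ.trA none (f i)))
  | _, mode, .iOr I f => closeG mode (.iOr I (fun i => Ξ.trA none (f i)))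
  | _, some (true, g), .ex φ =>
      .ex (Ξ.trA (some (true, (relabel Fin.castSucc g).and Ξ.uLast)) φ)
  | _, some (false, g), .all φ =>
      .all (Ξ.trA (some (false, (relabel Fin.castSucc g).or (nnfNeg Ξ.uLast))) φ)
  | _, mode, .ex φ => closeG mode (.ex (Ξ.trA (some (true, Ξ.uLast)) φ))
  | _, mode, .all φ => closeG mode (.all (Ξ.trA (some (false, nnfNeg Ξ.uLast)) φ))

/-- The translation Ξ(φ) of a formula. -/
def translate (Ξ : QFInterp σ τ) {n : ℕ} (φ : Formula τ n) : Formula σ n :=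
  Ξ.trA none φ

/-- The size |Ξ| of an interpretation: the sum of the sizes of its formulae. -/
noncomputable def size [Fintype τ.Rel] (Ξ : QFInterp σ τ) : Cardinal :=
  sizeC Ξ.xiU + ∑ R : τ.Rel, sizeC (Ξ.xiR R)

end QFInterp



/-! ### Auxiliary lemmas for Statement 12 -/

section Stmt12Aux

variable {τ : Vocab}

theorem append_zero' {α : Type} {m : ℕ} (u : Fin m → α) (v : Fin 0 → α) :
    Fin.append u v = u := by
  rw [show v = Fin.elim0 from funext fun i => i.elim0, Fin.append_elim0]
  rfl

theorem sat_nnfNeg (A : Struc τ) : ∀ {n : ℕ} (φ : Formula τ n) (v : Fin n → A.carrier),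
    Sat A (nnfNeg φ) v ↔ ¬ Sat A φ v := by
  intro n φ
  induction φ with
  | tru => intro v; simp [Sat, nnfNeg]
  | fls => intro v; simp [Sat, nnfNeg]
  | rel R ts => intro v; simp [Sat, nnfNeg]
  | nrel R ts => intro v; simp [Sat, nnfNeg]
  | eq i j => intro v; simp [Sat, nnfNeg]
  | neq i j => intro v; simp [Sat, nnfNeg]
  | iAnd I f ih => intro v; simp only [Sat, nnfNeg]; push_neg; exact exists_congr fun i => ih i v
  | iOr I f ih => intro v; simp only [Sat, nnfNeg]; push_neg; exact forall_congr' fun i => ih i v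
  | ex φ ih => intro v; simp only [Sat, nnfNeg]; push_neg; exact forall_congr' fun a => ih _
  | all φ ih => intro v; simp only [Sat, nnfNeg]; push_neg; exact exists_congr fun a => ih _

theorem sat_exBlock (A : Struc τ) {r : ℕ} : ∀ (k : ℕ) (φ : Formula τ (r + k))
    (v : Fin r → A.carrier),
    Sat A (exBlock k φ) v ↔ ∃ b : Fin k → A.carrier, Sat A φ (Fin.append v b) := by
  intro k
  induction k with
  | zero =>
    intro φ v
    constructor
    · intro h; exact ⟨Fin.elim0, by rw [append_zero']; exact h⟩
    · rintro ⟨b, h⟩; rw [append_zero'] at h; exact h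
  | succ k ih =>
    intro φ v
    constructor
    · intro h
      obtain ⟨b, a, h⟩ := (ih (Formula.ex φ) v).mp h
      exact ⟨Fin.snoc b a, by rw [Fin.append_snoc]; exact h⟩
    · rintro ⟨b, h⟩
      refine (ih (Formula.ex φ) v).mpr ⟨Fin.init b, b (Fin.last k), ?_⟩
      show Sat A φ (Fin.snoc (Fin.append v (Fin.init b)) _)
      rw [← Fin.append_snoc, Fin.snoc_init_self]
      exact h

theorem sat_allBlock (A : Struc τ) {r : ℕ} : ∀ (k : ℕ) (φ : Formula τ (r + k))
    (v : Fin r → A.carrier),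
    Sat A (allBlock k φ) v ↔ ∀ b : Fin k → A.carrier, Sat A φ (Fin.append v b) := by
  intro k
  induction k with
  | zero =>
    intro φ v
    constructor
    · intro h b; rw [append_zero']; exact h
    · intro h; have := h Fin.elim0; rwa [append_zero'] at this
  | succ k ih =>
    intro φ v
    constructor
    · intro h b
      have := (ih (Formula.all φ) v).mp h (Fin.init b) (b (Fin.last k))
      rwa [← Fin.append_snoc, Fin.snoc_init_self] at this
    · intro h
      refine (ih (Formula.all φ) v).mpr fun b a => ?_
      rw [show (Fin.snoc (Fin.append v b) a : Fin (r + (k+1)) → A.carrier)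
          = Fin.append v (Fin.snoc b a) from (Fin.append_snoc v b a).symm]
      exact h _

theorem nnfNeg_exBlock {r : ℕ} : ∀ (k : ℕ) (φ : Formula τ (r + k)),
    nnfNeg (exBlock k φ) = allBlock k (nnfNeg φ) := by
  intro k
  induction k with
  | zero => intro φ; rfl
  | succ k ih => intro φ; exact ih (Formula.ex φ)

theorem nnfNeg_allBlock {r : ℕ} : ∀ (k : ℕ) (φ : Formula τ (r + k)),
    nnfNeg (allBlock k φ) = exBlock k (nnfNeg φ) := by
  intro k
  induction k with
  | zero => intro φ; rfl
  | succ k ih => intro φ; exact ih (Formula.all φ)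

theorem isqf_nnfNeg {r : ℕ} {φ : Formula τ r} (h : IsQF φ) : IsQF (nnfNeg φ) := by
  induction h with
  | tru => exact IsQF.fls
  | fls => exact IsQF.tru
  | rel R ts => exact IsQF.nrel R ts
  | nrel R ts => exact IsQF.rel R ts
  | eq i j => exact IsQF.neq i j
  | neq i j => exact IsQF.eq i j
  | iAnd I hI f h ih => exact IsQF.iOr I hI _ ih
  | iOr I hI f h ih => exact IsQF.iAnd I hI _ ih

theorem sig0_qf {k r : ℕ} {φ : Formula τ r} (h : SigNK τ k 0 φ) : IsQF φ := by
  cases h with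
  | qf h => exact h
  | blk hn => exact absurd hn (lt_irrefl 0)

theorem pi0_qf {k r : ℕ} {φ : Formula τ r} (h : PiNK τ k 0 φ) : IsQF φ := by
  cases h with
  | qf h => exact h
  | blk hn => exact absurd hn (lt_irrefl 0)

theorem sig_inv {k n r : ℕ} {φ : Formula τ r} (h : SigNK τ k n φ) (hn : 0 < n) :
    ∃ (I : Type) (_ : Finite I) (f : I → Formula τ (r + k)) (n' : I → ℕ),
      (∀ i, n' i < n) ∧ (∀ i, PiNK τ k (n' i) (f i)) ∧ φ = exBlock k (Formula.iAnd I f) := by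
  cases h with
  | qf h => exact absurd hn (lt_irrefl 0)
  | blk hn' I hI f n' hlt hp => exact ⟨I, hI, f, n', hlt, hp, rfl⟩

theorem pi_inv {k n r : ℕ} {φ : Formula τ r} (h : PiNK τ k n φ) (hn : 0 < n) :
    ∃ (I : Type) (_ : Finite I) (f : I → Formula τ (r + k)) (n' : I → ℕ),
      (∀ i, n' i < n) ∧ (∀ i, SigNK τ k (n' i) (f i)) ∧ φ = allBlock k (Formula.iOr I f) := by
  cases h with
  | qf h => exact absurd hn (lt_irrefl 0)
  | blk hn' I hI f n' hlt hp => exact ⟨I, hI, f, n', hlt, hp, rfl⟩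

theorem nnfNeg_level (k : ℕ) : ∀ n : ℕ,
    (∀ (r : ℕ) (φ : Formula τ r), SigNK τ k n φ → PiNK τ k n (nnfNeg φ)) ∧
    (∀ (r : ℕ) (φ : Formula τ r), PiNK τ k n φ → SigNK τ k n (nnfNeg φ)) := by
  intro n
  induction n using Nat.strong_induction_on with
  | _ n ih =>
    match n with
    | 0 =>
      exact ⟨fun r φ h => PiNK.qf (isqf_nnfNeg (sig0_qf h)),
             fun r φ h => SigNK.qf (isqf_nnfNeg (pi0_qf h))⟩
    | n+1 =>
      constructor
      · intro r φ h
        obtain ⟨I, hI, f, n', hlt, hp, rfl⟩ := sig_inv h (Nat.succ_pos n)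
        rw [nnfNeg_exBlock]
        exact PiNK.blk (Nat.succ_pos n) I hI (fun i => nnfNeg (f i)) n' hlt
          (fun i => (ih (n' i) (hlt i)).2 _ _ (hp i))
      · intro r φ h
        obtain ⟨I, hI, f, n', hlt, hp, rfl⟩ := pi_inv h (Nat.succ_pos n)
        rw [nnfNeg_allBlock]
        exact SigNK.blk (Nat.succ_pos n) I hI (fun i => nnfNeg (f i)) n' hlt
          (fun i => (ih (n' i) (hlt i)).1 _ _ (hp i))

theorem piso_symm {A₁ A₂ : Struc τ} {r : ℕ} {a₁ : Fin r → A₁.carrier}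
    {a₂ : Fin r → A₂.carrier} (h : PIso A₁ A₂ r a₁ a₂) : PIso A₂ A₁ r a₂ a₁ :=
  ⟨fun i j => (h.1 i j).symm, fun R ts => (h.2 R ts).symm⟩

theorem piso_restrict {A₁ A₂ : Struc τ} {r k : ℕ} {a₁ : Fin r → A₁.carrier}
    {b₁ : Fin k → A₁.carrier} {a₂ : Fin r → A₂.carrier} {b₂ : Fin k → A₂.carrier}
    (h : PIso A₁ A₂ (r + k) (Fin.append a₁ b₁) (Fin.append a₂ b₂)) :
    PIso A₁ A₂ r a₁ a₂ := by
  constructor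
  · intro i j
    have := h.1 (Fin.castAdd k i) (Fin.castAdd k j)
    simpa [Fin.append_left] using this
  · intro R ts
    have := h.2 R (fun l => Fin.castAdd k (ts l))
    simpa [Fin.append_left] using this

theorem qf_sat_iff {A₁ A₂ : Struc τ} {r : ℕ} {a₁ : Fin r → A₁.carrier}
    {a₂ : Fin r → A₂.carrier} (hp : PIso A₁ A₂ r a₁ a₂) {φ : Formula τ r}
    (hq : IsQF φ) : Sat A₁ φ a₁ ↔ Sat A₂ φ a₂ := by
  induction hq with
  | tru => simp [Sat]
  | fls => simp [Sat]
  | rel R ts => exact hp.2 R ts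
  | nrel R ts => exact not_congr (hp.2 R ts)
  | eq i j => exact hp.1 i j
  | neq i j => exact not_congr (hp.1 i j)
  | iAnd I hI f h ih => simp only [Sat]; exact forall_congr' fun i => ih i
  | iOr I hI f h ih => simp only [Sat]; exact exists_congr fun i => ih i

theorem piso_of_dwin (k : ℕ) : ∀ (n : ℕ) (A₁ A₂ : Struc τ) (r : ℕ)
    (a₁ : Fin r → A₁.carrier) (a₂ : Fin r → A₂.carrier),
    DWinPrefix k n A₁ A₂ r a₁ a₂ → (k = 0 ∨ Nonempty A₁.carrier) →
    PIso A₁ A₂ r a₁ a₂ := by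
  intro n
  induction n with
  | zero => intro A₁ A₂ r a₁ a₂ hw _; exact hw
  | succ n ih =>
    intro A₁ A₂ r a₁ a₂ hw hne
    have hb : Nonempty (Fin k → A₁.carrier) := by
      rcases hne with h | h
      · subst h; exact ⟨Fin.elim0⟩
      · exact ⟨fun _ => h.some⟩
    obtain ⟨b₁⟩ := hb
    simp only [DWinPrefix] at hw
    obtain ⟨b₂, hw2⟩ := hw b₁
    have hne2 : k = 0 ∨ Nonempty A₂.carrier := by
      rcases Nat.eq_zero_or_pos k with hk | hk
      · exact Or.inl hk
      · exact Or.inr ⟨b₂ ⟨0, hk⟩⟩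
    exact piso_restrict (piso_symm (ih A₂ A₁ (r + k) _ _ hw2 hne2))

theorem transfer (k : ℕ) : ∀ (n : ℕ) (A₁ A₂ : Struc τ) (r : ℕ)
    (a₁ : Fin r → A₁.carrier) (a₂ : Fin r → A₂.carrier),
    DWinPrefix k n A₁ A₂ r a₁ a₂ → ∀ m : ℕ, m ≤ n →
    (m = n ∨ k = 0 ∨ Nonempty A₁.carrier) →
    (∀ φ : Formula τ r, SigNK τ k m φ → Sat A₁ φ a₁ → Sat A₂ φ a₂) ∧
    (∀ φ : Formula τ r, PiNK τ k m φ → Sat A₂ φ a₂ → Sat A₁ φ a₁) := by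
  intro n
  induction n with
  | zero =>
    intro A₁ A₂ r a₁ a₂ hw m hm _
    have hm0 : m = 0 := Nat.le_zero.mp hm
    subst hm0
    have hp : PIso A₁ A₂ r a₁ a₂ := hw
    exact ⟨fun φ hφ => (qf_sat_iff hp (sig0_qf hφ)).mp,
           fun φ hφ => (qf_sat_iff hp (pi0_qf hφ)).mpr⟩
  | succ n ih =>
    intro A₁ A₂ r a₁ a₂ hw m hm hside
    rcases m with _ | m'
    · have hside' : k = 0 ∨ Nonempty A₁.carrier := by
        rcases hside with h | h
        · exact absurd h (by omega)
        · exact h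
      have hp : PIso A₁ A₂ r a₁ a₂ := piso_of_dwin k (n+1) A₁ A₂ r a₁ a₂ hw hside'
      exact ⟨fun φ hφ => (qf_sat_iff hp (sig0_qf hφ)).mp,
             fun φ hφ => (qf_sat_iff hp (pi0_qf hφ)).mpr⟩
    · simp only [DWinPrefix] at hw
      constructor
      · intro φ hφ hsat
        obtain ⟨I, hI, f, n', hlt, hPi, rfl⟩ := sig_inv hφ (Nat.succ_pos m')
        obtain ⟨b₁, hb₁⟩ := (sat_exBlock A₁ k _ a₁).mp hsat
        have hb₁' : ∀ i : I, Sat A₁ (f i) (Fin.append a₁ b₁) := hb₁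
        obtain ⟨b₂, hw2⟩ := hw b₁
        refine (sat_exBlock A₂ k _ a₂).mpr ⟨b₂, ?_⟩
        intro i
        have hne : n' i = n ∨ k = 0 ∨ Nonempty A₂.carrier := by
          rcases Nat.eq_zero_or_pos k with hk | hk
          · exact Or.inr (Or.inl hk)
          · exact Or.inr (Or.inr ⟨b₂ ⟨0, hk⟩⟩)
        have hle : n' i ≤ n := by have := hlt i; omega
        exact (ih A₂ A₁ (r + k) _ _ hw2 (n' i) hle hne).2 (f i) (hPi i) (hb₁' i)
      · intro φ hφ hsat
        obtain ⟨J, hJ, g, n', hlt, hSig, rfl⟩ := pi_inv hφ (Nat.succ_pos m')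
        refine (sat_allBlock A₁ k _ a₁).mpr fun b₁ => ?_
        obtain ⟨b₂, hw2⟩ := hw b₁
        have hts : ∃ j : J, Sat A₂ (g j) (Fin.append a₂ b₂) :=
          (sat_allBlock A₂ k _ a₂).mp hsat b₂
        obtain ⟨j, hj⟩ := hts
        have hne : n' j = n ∨ k = 0 ∨ Nonempty A₂.carrier := by
          rcases Nat.eq_zero_or_pos k with hk | hk
          · exact Or.inr (Or.inl hk)
          · exact Or.inr (Or.inr ⟨b₂ ⟨0, hk⟩⟩)
        have hle : n' j ≤ n := by have := hlt j; omega
        exact ⟨j, (ih A₂ A₁ (r + k) _ _ hw2 (n' j) hle hne).1 (g j) (hSig j) hj⟩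

noncomputable def cdec (p : Prop) : Bool := @decide p (Classical.propDecidable p)

theorem cdec_eq_true {p : Prop} : cdec p = true ↔ p := by
  simp [cdec]

def PoolIdx (τ : Vocab) (k : ℕ) : ℕ → ℕ → Type
  | 0, r => ((Fin r × Fin r) ⊕ (Σ R : τ.Rel, (Fin (τ.arity R) → Fin r))) × Bool
  | n+1, r => PoolIdx τ k n (r + k) → Bool

theorem finite_poolIdx [Fintype τ.Rel] (k : ℕ) : ∀ (n r : ℕ), Finite (PoolIdx τ k n r) := by
  intro n
  induction n with
  | zero =>
    intro r
    exact inferInstanceAs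
      (Finite (((Fin r × Fin r) ⊕ (Σ R : τ.Rel, (Fin (τ.arity R) → Fin r))) × Bool))
  | succ n ih =>
    intro r
    haveI := ih (r + k)
    exact inferInstanceAs (Finite (PoolIdx τ k n (r + k) → Bool))

def pool (k : ℕ) : ∀ (n r : ℕ), PoolIdx τ k n r → Formula τ r
  | 0, _, (Sum.inl (i, j), true) => .eq i j
  | 0, _, (Sum.inl (i, j), false) => .neq i j
  | 0, _, (Sum.inr ⟨R, ts⟩, true) => .rel R ts
  | 0, _, (Sum.inr ⟨R, ts⟩, false) => .nrel R ts
  | n+1, r, G => exBlock k (Formula.iAnd {p : PoolIdx τ k n (r + k) // G p = true}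
      (fun p => nnfNeg (pool k n (r + k) p.1)))

theorem pool_succ (k n r : ℕ) (G : PoolIdx τ k n (r + k) → Bool) :
    pool k (n+1) r (G : PoolIdx τ k (n+1) r)
      = exBlock k (Formula.iAnd {p : PoolIdx τ k n (r + k) // G p = true}
          (fun p => nnfNeg (pool k n (r + k) p.1))) := rfl

theorem pool_sig [Fintype τ.Rel] (k : ℕ) : ∀ (n r : ℕ) (p : PoolIdx τ k n r),
    SigNK τ k n (pool k n r p) := by
  intro n
  induction n with
  | zero =>
    intro r p
    rcases p with ⟨⟨i, j⟩ | ⟨R, ts⟩, b⟩ <;> cases b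
    · exact SigNK.qf (IsQF.neq i j)
    · exact SigNK.qf (IsQF.eq i j)
    · exact SigNK.qf (IsQF.nrel R ts)
    · exact SigNK.qf (IsQF.rel R ts)
  | succ n ih =>
    intro r G
    haveI := finite_poolIdx (τ := τ) k n (r + k)
    exact SigNK.blk (Nat.succ_pos n) _ Subtype.finite _ (fun _ => n)
      (fun _ => Nat.lt_succ_self n)
      (fun p => (nnfNeg_level k n).1 _ _ (ih (r + k) p.1))

theorem pool_dist [Fintype τ.Rel] (k : ℕ) : ∀ (n : ℕ) (A₁ A₂ : Struc τ) (r : ℕ)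
    (a₁ : Fin r → A₁.carrier) (a₂ : Fin r → A₂.carrier),
    ¬ DWinPrefix k n A₁ A₂ r a₁ a₂ →
    ∃ p : PoolIdx τ k n r, Sat A₁ (pool k n r p) a₁ ∧ ¬ Sat A₂ (pool k n r p) a₂ := by
  intro n
  induction n with
  | zero =>
    intro A₁ A₂ r a₁ a₂ h
    rcases not_and_or.mp h with h | h
    · push_neg at h
      obtain ⟨i, j, hij⟩ := h
      rcases hij with ⟨h1, h2⟩ | ⟨h1, h2⟩
      · exact ⟨(Sum.inl (i, j), true), h1, h2⟩
      · refine ⟨(Sum.inl (i, j), false), h1, ?_⟩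
        intro hn
        exact hn h2
    · push_neg at h
      obtain ⟨R, ts, hR⟩ := h
      rcases hR with ⟨h1, h2⟩ | ⟨h1, h2⟩
      · exact ⟨(Sum.inr ⟨R, ts⟩, true), h1, h2⟩
      · refine ⟨(Sum.inr ⟨R, ts⟩, false), h1, ?_⟩
        intro hn
        exact hn h2
  | succ n ih =>
    intro A₁ A₂ r a₁ a₂ h
    simp only [DWinPrefix] at h
    push_neg at h
    obtain ⟨b₁, hb₁⟩ := h
    refine ⟨(fun p => cdec (¬ Sat A₁ (pool k n (r + k) p) (Fin.append a₁ b₁)) :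
      PoolIdx τ k (n+1) r), ?_, ?_⟩
    · rw [pool_succ]
      refine (sat_exBlock A₁ k _ a₁).mpr ⟨b₁, ?_⟩
      intro q
      exact (sat_nnfNeg A₁ _ _).mpr (cdec_eq_true.mp q.2)
    · rw [pool_succ]
      intro hs
      obtain ⟨b₂, hb₂⟩ := (sat_exBlock A₂ k _ a₂).mp hs
      have hb₂' : ∀ q : {p : PoolIdx τ k n (r + k) //
          cdec (¬ Sat A₁ (pool k n (r + k) p) (Fin.append a₁ b₁)) = true},
          Sat A₂ (nnfNeg (pool k n (r + k) q.1)) (Fin.append a₂ b₂) := hb₂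
      obtain ⟨p0, hp1, hp2⟩ := ih A₂ A₁ (r + k) _ _ (hb₁ b₂)
      exact (sat_nnfNeg A₂ _ _).mp (hb₂' ⟨p0, cdec_eq_true.mpr hp2⟩) hp1

theorem dwinTree_to_equiv (k : ℕ) : ∀ (n : ℕ) (A₁ A₂ : Struc τ) (r : ℕ)
    (a₁ : Fin r → A₁.carrier) (a₂ : Fin r → A₂.carrier),
    DWinTree k n A₁ A₂ r a₁ a₂ → EquivNK n k A₁ A₂ r a₁ a₂ := by
  intro n
  cases n with
  | zero =>
    intro A₁ A₂ r a₁ a₂ hw φ hφ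
    exact qf_sat_iff hw (sig0_qf hφ)
  | succ n =>
    intro A₁ A₂ r a₁ a₂ hw φ hφ
    simp only [DWinTree] at hw
    obtain ⟨I, hI, f, n', hlt, hPi, rfl⟩ := sig_inv hφ (Nat.succ_pos n)
    constructor
    · intro hsat
      obtain ⟨b₁, hb₁⟩ := (sat_exBlock A₁ k _ a₁).mp hsat
      have hb₁' : ∀ i : I, Sat A₁ (f i) (Fin.append a₁ b₁) := hb₁
      obtain ⟨b₂, hw2⟩ := hw.1 b₁
      refine (sat_exBlock A₂ k _ a₂).mpr ⟨b₂, ?_⟩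
      intro i
      have hne : n' i = n ∨ k = 0 ∨ Nonempty A₂.carrier := by
        rcases Nat.eq_zero_or_pos k with hk | hk
        · exact Or.inr (Or.inl hk)
        · exact Or.inr (Or.inr ⟨b₂ ⟨0, hk⟩⟩)
      have hle : n' i ≤ n := by have := hlt i; omega
      exact (transfer k n A₂ A₁ (r + k) _ _ hw2 (n' i) hle hne).2 (f i) (hPi i) (hb₁' i)
    · intro hsat
      obtain ⟨b₂, hb₂⟩ := (sat_exBlock A₂ k _ a₂).mp hsat
      have hb₂' : ∀ i : I, Sat A₂ (f i) (Fin.append a₂ b₂) := hb₂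
      obtain ⟨b₁, hw2⟩ := hw.2 b₂
      refine (sat_exBlock A₁ k _ a₁).mpr ⟨b₁, ?_⟩
      intro i
      have hne : n' i = n ∨ k = 0 ∨ Nonempty A₁.carrier := by
        rcases Nat.eq_zero_or_pos k with hk | hk
        · exact Or.inr (Or.inl hk)
        · exact Or.inr (Or.inr ⟨b₁ ⟨0, hk⟩⟩)
      have hle : n' i ≤ n := by have := hlt i; omega
      exact (transfer k n A₁ A₂ (r + k) _ _ hw2 (n' i) hle hne).2 (f i) (hPi i) (hb₂' i)

theorem equiv_to_dwinTree [Fintype τ.Rel] (k : ℕ) : ∀ (n : ℕ) (A₁ A₂ : Struc τ) (r : ℕ)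
    (a₁ : Fin r → A₁.carrier) (a₂ : Fin r → A₂.carrier),
    EquivNK n k A₁ A₂ r a₁ a₂ → DWinTree k n A₁ A₂ r a₁ a₂ := by
  intro n
  cases n with
  | zero =>
    intro A₁ A₂ r a₁ a₂ he
    constructor
    · intro i j; exact he (Formula.eq i j) (SigNK.qf (IsQF.eq i j))
    · intro R ts; exact he (Formula.rel R ts) (SigNK.qf (IsQF.rel R ts))
  | succ n =>
    intro A₁ A₂ r a₁ a₂ he
    simp only [DWinTree]
    constructor
    · intro b₁
      by_contra hc
      push_neg at hc
      have hS1 : Sat A₁ (pool k (n+1) r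
          (fun p => cdec (¬ Sat A₁ (pool k n (r + k) p) (Fin.append a₁ b₁)))) a₁ := by
        rw [pool_succ]
        refine (sat_exBlock A₁ k _ a₁).mpr ⟨b₁, ?_⟩
        intro q
        exact (sat_nnfNeg A₁ _ _).mpr (cdec_eq_true.mp q.2)
      have hS2 : ¬ Sat A₂ (pool k (n+1) r
          (fun p => cdec (¬ Sat A₁ (pool k n (r + k) p) (Fin.append a₁ b₁)))) a₂ := by
        rw [pool_succ]
        intro hs
        obtain ⟨b₂, hb₂⟩ := (sat_exBlock A₂ k _ a₂).mp hs
        have hb₂' : ∀ q : {p : PoolIdx τ k n (r + k) //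
            cdec (¬ Sat A₁ (pool k n (r + k) p) (Fin.append a₁ b₁)) = true},
            Sat A₂ (nnfNeg (pool k n (r + k) q.1)) (Fin.append a₂ b₂) := hb₂
        obtain ⟨p0, hp1, hp2⟩ := pool_dist k n A₂ A₁ (r + k) _ _ (hc b₂)
        exact (sat_nnfNeg A₂ _ _).mp (hb₂' ⟨p0, cdec_eq_true.mpr hp2⟩) hp1
      exact hS2 ((he _ (pool_sig k (n+1) r _)).mp hS1)
    · intro b₂
      by_contra hc
      push_neg at hc
      have hS2 : Sat A₂ (pool k (n+1) r
          (fun p => cdec (¬ Sat A₂ (pool k n (r + k) p) (Fin.append a₂ b₂)))) a₂ := by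
        rw [pool_succ]
        refine (sat_exBlock A₂ k _ a₂).mpr ⟨b₂, ?_⟩
        intro q
        exact (sat_nnfNeg A₂ _ _).mpr (cdec_eq_true.mp q.2)
      have hS1 : ¬ Sat A₁ (pool k (n+1) r
          (fun p => cdec (¬ Sat A₂ (pool k n (r + k) p) (Fin.append a₂ b₂)))) a₁ := by
        rw [pool_succ]
        intro hs
        obtain ⟨b₁, hb₁⟩ := (sat_exBlock A₁ k _ a₁).mp hs
        have hb₁' : ∀ q : {p : PoolIdx τ k n (r + k) //
            cdec (¬ Sat A₂ (pool k n (r + k) p) (Fin.append a₂ b₂)) = true},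
            Sat A₁ (nnfNeg (pool k n (r + k) q.1)) (Fin.append a₁ b₁) := hb₁
        obtain ⟨p0, hp1, hp2⟩ := pool_dist k n A₁ A₂ (r + k) _ _ (hc b₁)
        exact (sat_nnfNeg A₁ _ _).mp (hb₁' ⟨p0, cdec_eq_true.mpr hp2⟩) hp1
      exact hS1 ((he _ (pool_sig k (n+1) r _)).mpr hS2)

end Stmt12Aux

/-- The Duplicator has a winning strategy in the (n,k)-tree-prefix game on
{(A₁,ā₁),(A₂,ā₂)} iff (A₁,ā₁) and (A₂,ā₂) agree on all tΣ_{(n,k)} formulae φ(x̄) with |x̄| = r. -/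
theorem stmt12 (τ : Vocab) [Fintype τ.Rel] (n k r : ℕ) (A₁ A₂ : Struc τ)
    (a₁ : Fin r → A₁.carrier) (a₂ : Fin r → A₂.carrier) :
    DWinTree k n A₁ A₂ r a₁ a₂ ↔ EquivNK n k A₁ A₂ r a₁ a₂ :=
  ⟨dwinTree_to_equiv k n A₁ A₂ r a₁ a₂, equiv_to_dwinTree k n A₁ A₂ r a₁ a₂⟩

end FV
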